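/- Let k₀ = max{0, ⌊−log₂θ₀ + log₂(3/4)⌋}, 1 ≤ k ≤ k₀ − 5, and k₁ = k + ⌈log₂(k₀ − k − 3)⌉ + 2. If θ ≥ 2^{−k} and 0 < α ≤ 2^{−k₁}, then the extended Kullback-Leibler divergence satisfies D^α(θ₀‖θ) ≥ 2^{−k−4}. -/

import Mathlib

noncomputable def extKL (α θ₀ θ : ℝ) : ℝ :=
  α * Real.log (θ₀ / θ) + (1 - α) * Real.log ((1 - θ₀) / (1 - θ))

set_option maxHeartbeats 2000000 in
theorem extKL_lower_bound_lsteps (θ₀ θ α : ℝ)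
    (hθ₀ : θ₀ ∈ Set.Ioc (0:ℝ) (1/2)) (hθ : θ ∈ Set.Ioo (0:ℝ) 1)
    (k : ℤ) (hk1 : 1 ≤ k)
    (hk2 : k ≤ max 0 ⌊Real.logb 2 (3/4) - Real.logb 2 θ₀⌋ - 5)
    (hθk : θ ≥ (2:ℝ) ^ (-k))
    (hα0 : 0 < α)
    (hα : α ≤ (2:ℝ) ^ (-(k + ⌈Real.logb 2 ((max 0 ⌊Real.logb 2 (3/4) - Real.logb 2 θ₀⌋ : ℤ) - k - 3 : ℝ)⌉ + 2))) :
    extKL α θ₀ θ ≥ (2:ℝ) ^ (-k - 4) := by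
  obtain ⟨hθ₀pos, hθ₀half⟩ := hθ₀
  obtain ⟨hθpos, hθlt⟩ := hθ
  have hl2 : (0:ℝ) < Real.log 2 := Real.log_pos (by norm_num)
  set F : ℤ := ⌊Real.logb 2 (3/4) - Real.logb 2 θ₀⌋ with hFdef
  have hmax : max 0 F = F := by omega
  rw [hmax] at hk2 hα
  have hF6 : k + 5 ≤ F := by omega
  -- floor bounds, converted to log form
  have h1 : (F:ℝ) ≤ Real.logb 2 (3/4) - Real.logb 2 θ₀ := Int.floor_le _
  have h2 : Real.logb 2 (3/4) - Real.logb 2 θ₀ < F + 1 := Int.lt_floor_add_one _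
  rw [Real.logb, Real.logb, div_sub_div_same] at h1 h2
  have h1' : (F:ℝ) * Real.log 2 ≤ Real.log (3/4) - Real.log θ₀ := (le_div_iff₀ hl2).mp h1
  have h2' : Real.log (3/4) - Real.log θ₀ < ((F:ℝ) + 1) * Real.log 2 := (div_lt_iff₀ hl2).mp h2
  -- θ₀ bounds
  have hub : θ₀ ≤ 3/4 * (2:ℝ)^(-F) := by
    rw [← Real.log_le_log_iff hθ₀pos (by positivity),
      Real.log_mul (by norm_num) (zpow_ne_zero _ two_ne_zero), Real.log_zpow]
    push_cast; linarith
  have hlb : 3/8 * (2:ℝ)^(-F) < θ₀ := by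
    rw [← Real.log_lt_log_iff (by positivity) hθ₀pos,
      Real.log_mul (by norm_num) (zpow_ne_zero _ two_ne_zero), Real.log_zpow,
      show (3/8 : ℝ) = 3/4 / 2 by norm_num, Real.log_div (by norm_num) two_ne_zero]
    push_cast; linarith
  -- ceiling bound : (m:ℝ) ≤ 2^c
  set m : ℤ := F - k - 3 with hmdef
  have hm2 : 2 ≤ m := by omega
  set c : ℤ := ⌈Real.logb 2 ((F:ℤ) - k - 3 : ℝ)⌉ with hcdef
  have hmR : (m:ℝ) = (F:ℝ) - (k:ℝ) - 3 := by rw [hmdef]; push_cast; ring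
  have hmpos : (0:ℝ) < (m:ℝ) := by exact_mod_cast (by omega : (0:ℤ) < m)
  have hmc : (m:ℝ) ≤ (2:ℝ)^c := by
    calc (m:ℝ) = (2:ℝ) ^ Real.logb 2 (m:ℝ) :=
          (Real.rpow_logb (by norm_num) (by norm_num) hmpos).symm
      _ ≤ (2:ℝ) ^ ((c:ℤ):ℝ) := by
          apply Real.rpow_le_rpow_of_exponent_le one_le_two
          rw [hcdef, show ((F:ℤ):ℝ) - (k:ℝ) - 3 = (m:ℝ) from hmR.symm]
          exact Int.le_ceil _
      _ = (2:ℝ)^c := Real.rpow_intCast 2 c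
  -- α bounds
  set t : ℝ := (2:ℝ)^(-k) with htdef
  have htpos : (0:ℝ) < t := by positivity
  have hthalf : t ≤ 1/2 := by
    rw [htdef, show (1/2:ℝ) = (2:ℝ)^(-1:ℤ) by norm_num]
    exact zpow_le_zpow_right₀ one_le_two (by omega)
  have ht2 : (2:ℝ)^(-k-2) = t/4 := by
    rw [htdef, zpow_sub₀ two_ne_zero]; norm_num
  have hαm : α * (m:ℝ) ≤ t/4 := by
    have h := mul_le_mul hα hmc hmpos.le (by positivity)
    rw [← zpow_add₀ two_ne_zero, show -(k + c + 2) + c = -k-2 by ring, ht2] at h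
    exact h
  have hα8 : α ≤ t/8 := by nlinarith [(by exact_mod_cast hm2 : (2:ℝ) ≤ (m:ℝ))]
  have hα16 : α ≤ 1/16 := by linarith
  -- θ₀ vs t
  have hFk : (2:ℝ)^(-F) ≤ (2:ℝ)^(-k-5) := zpow_le_zpow_right₀ one_le_two (by omega)
  have ht5 : (2:ℝ)^(-k-5) = t/32 := by rw [htdef, zpow_sub₀ two_ne_zero]; norm_num
  have hθ₀t : θ₀ ≤ 3/128 * t := by rw [ht5] at hFk; nlinarith
  -- lower bound on log (θ₀ / t)
  have hL1 : -((m:ℝ) + 5) * Real.log 2 ≤ Real.log (θ₀ / t) := by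
    have h2F : (0:ℝ) < (2:ℝ)^(-F) := by positivity
    have hq : (2:ℝ)^(k - F - 2) ≤ θ₀ / t := by
      rw [le_div_iff₀ htpos, htdef, ← zpow_add₀ two_ne_zero,
        show k - F - 2 + -k = -F - 2 by ring, zpow_sub₀ two_ne_zero,
        show ((2:ℝ)^(2:ℤ)) = 4 by norm_num]
      linarith
    calc -((m:ℝ) + 5) * Real.log 2 = ((k:ℝ) - F - 2) * Real.log 2 := by rw [hmR]; ring
      _ = Real.log ((2:ℝ)^(k - F - 2)) := by rw [Real.log_zpow]; push_cast; ring
      _ ≤ Real.log (θ₀ / t) := (Real.log_le_log_iff (by positivity) (by positivity)).mpr hq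
  -- log bounds near 1
  have h1mt : (0:ℝ) < 1 - t := by linarith
  have h1mθ₀ : (0:ℝ) < 1 - θ₀ := by linarith
  have hlog1t : Real.log (1 - t) ≤ -t := by
    have := Real.log_le_sub_one_of_pos h1mt; linarith
  have hlog1θ₀ : -2*θ₀ ≤ Real.log (1 - θ₀) := by
    have h2 := Real.log_le_sub_one_of_pos (show (0:ℝ) < (1-θ₀)⁻¹ by positivity)
    rw [Real.log_inv] at h2
    have h3 : (1-θ₀)⁻¹ ≤ 1 + 2*θ₀ := by
      rw [inv_eq_one_div, div_le_iff₀ h1mθ₀]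
      nlinarith
    linarith
  -- base case bound : extKL at θ = t
  have hbase : α * Real.log (θ₀ / t) + (1-α) * Real.log ((1-θ₀)/(1-t)) ≥ t/16 := by
    have hL2 : 61/64 * t ≤ Real.log ((1-θ₀)/(1-t)) := by
      rw [Real.log_div (ne_of_gt h1mθ₀) (ne_of_gt h1mt)]
      linarith
    have hαL1 : α * Real.log (θ₀/t) ≥ -(7/8) * (Real.log 2 * t) := by
      nlinarith [mul_le_mul_of_nonneg_left hL1 hα0.le,
        mul_le_mul_of_nonneg_right hαm hl2.le,
        mul_le_mul_of_nonneg_right hα8 hl2.le]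
    have hfin : (1-α) * Real.log ((1-θ₀)/(1-t)) ≥ 15/16 * (61/64 * t) := by
      nlinarith [htpos]
    nlinarith [mul_le_mul_of_nonneg_right Real.log_two_lt_d9.le htpos.le]
  -- monotonicity : extKL at θ ≥ extKL at t
  have hmono : extKL α θ₀ θ ≥ α * Real.log (θ₀ / t) + (1-α) * Real.log ((1-θ₀)/(1-t)) := by
    unfold extKL
    rw [Real.log_div (ne_of_gt hθ₀pos) (ne_of_gt hθpos),
      Real.log_div (by linarith : (1:ℝ) - θ₀ ≠ 0) (by linarith : (1:ℝ) - θ ≠ 0),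
      Real.log_div (ne_of_gt hθ₀pos) (ne_of_gt htpos),
      Real.log_div (ne_of_gt h1mθ₀) (ne_of_gt h1mt)]
    have hA : Real.log θ - Real.log t ≤ θ/t - 1 := by
      have h := Real.log_le_sub_one_of_pos (show (0:ℝ) < θ/t by positivity)
      rwa [Real.log_div (ne_of_gt hθpos) (ne_of_gt htpos)] at h
    have hB : Real.log (1-θ) - Real.log (1-t) ≤ (1-θ)/(1-t) - 1 := by
      have h := Real.log_le_sub_one_of_pos (div_pos (by linarith : (0:ℝ) < 1-θ) h1mt)
      rwa [Real.log_div (by linarith) (ne_of_gt h1mt)] at h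
    have hA' : t * (Real.log θ - Real.log t) ≤ θ - t := by
      have h := mul_le_mul_of_nonneg_left hA htpos.le
      have he : t * (θ / t - 1) = θ - t := by field_simp
      linarith [he ▸ h]
    have hB' : (1-t) * (Real.log (1-θ) - Real.log (1-t)) ≤ t - θ := by
      have h := mul_le_mul_of_nonneg_left hB h1mt.le
      have he : (1-t) * ((1-θ)/(1-t) - 1) = t - θ := by field_simp; ring
      linarith [he ▸ h]
    have hθt : t ≤ θ := hθk
    have hαt : α ≤ t := by linarith
    nlinarith [mul_le_mul_of_nonneg_left hA' (mul_nonneg hα0.le h1mt.le),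
      mul_le_mul_of_nonneg_left hB' (mul_nonneg (by linarith : (0:ℝ) ≤ 1 - α) htpos.le),
      mul_nonneg (by linarith : (0:ℝ) ≤ θ - t) (by linarith : (0:ℝ) ≤ t - α),
      mul_pos htpos h1mt]
  have hfinal : (2:ℝ)^(-k-4) = t/16 := by rw [htdef, zpow_sub₀ two_ne_zero]; norm_num
  rw [hfinal]
  linarith
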